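/- Let δ > 0 with δ ∉ ℕ. On the rectangular torus T²_δ = (ℝ/2πδℤ) × (ℝ/2πℤ), there exists a constant c_δ > 0 such that for every mean-free f ∈ H²(T²_δ) one has ‖(1 + Δ_δ^{-1})∂_x f‖_{L²} ≥ c_δ·‖∂_x f‖_{L²}, where Δ_δ^{-1} is the inverse Laplacian on mean-free functions. -/
import Mathlib

open Real

set_option maxHeartbeats 800000

lemma symbol_lower_bound (δ : ℝ) (hδ : 0 < δ) (hδn : ∀ n : ℕ, δ ≠ n) :
    ∃ c : ℝ, 0 < c ∧ ∀ k ℓ : ℤ, k ≠ 0 →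
      c ≤ |1 - (((k : ℝ) / δ) ^ 2 + (ℓ : ℝ) ^ 2)⁻¹| := by
  have hkpos : ∀ k : ℤ, k ≠ 0 → 0 < ((k : ℝ) / δ) ^ 2 := by
    intro k hk
    have hk' : ((k : ℝ) / δ) ≠ 0 :=
      div_ne_zero (Int.cast_ne_zero.mpr hk) hδ.ne'
    positivity
  have hspos : ∀ k ℓ : ℤ, k ≠ 0 → 0 < ((k : ℝ) / δ) ^ 2 + (ℓ : ℝ) ^ 2 := by
    intro k ℓ hk
    have := hkpos k hk
    nlinarith [sq_nonneg ((ℓ : ℝ))]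
  set g : ℤ × ℤ → ℝ := fun p => |1 - (((p.1 : ℝ) / δ) ^ 2 + (p.2 : ℝ) ^ 2)⁻¹| with hg
  set K : ℤ := ⌈2 * δ⌉ with hK
  have hK1 : 1 ≤ K := Int.ceil_pos.mpr (by linarith)
  set F : Finset (ℤ × ℤ) := ((Finset.Icc (-K) K).erase 0) ×ˢ Finset.Icc (-1) 1 with hF
  have hFne : F.Nonempty := by
    refine ⟨(1, 0), ?_⟩
    simp only [hF, Finset.mem_product, Finset.mem_erase, Finset.mem_Icc]
    omega
  have hgpos : ∀ p ∈ F, 0 < g p := by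
    rintro ⟨k, ℓ⟩ hp
    simp only [hF, Finset.mem_product, Finset.mem_erase, Finset.mem_Icc] at hp
    have hk : k ≠ 0 := hp.1.1
    have hs := hspos k ℓ hk
    have hne : ((k : ℝ) / δ) ^ 2 + (ℓ : ℝ) ^ 2 ≠ 1 := by
      intro h1
      have hl : ℓ = 0 := by
        by_contra hl
        have hℓ1 : (1 : ℤ) ≤ ℓ ^ 2 := by
          rcases lt_or_gt_of_ne hl with h | h <;> nlinarith
        have hℓ1' : (1 : ℝ) ≤ (ℓ : ℝ) ^ 2 := by exact_mod_cast hℓ1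
        have := hkpos k hk
        nlinarith
      rw [hl] at h1
      simp only [Int.cast_zero, ne_eq, OfNat.ofNat_ne_zero, not_false_eq_true,
        zero_pow, add_zero] at h1
      have hk2 : (k : ℝ) ^ 2 = δ ^ 2 := by
        have hd2 : (0 : ℝ) < δ ^ 2 := by positivity
        rw [div_pow] at h1
        field_simp at h1
        linarith
      have hkd : |(k : ℝ)| = δ := by
        nlinarith [abs_nonneg (k : ℝ), sq_abs (k : ℝ)]
      have : δ = (k.natAbs : ℕ) := by
        rw [← hkd]
        push_cast
        rw [Nat.cast_natAbs]
        push_cast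
        ring
      exact hδn k.natAbs this
    have hinv : (((k : ℝ) / δ) ^ 2 + (ℓ : ℝ) ^ 2)⁻¹ ≠ 1 := by
      intro h; exact hne (inv_eq_one.mp h)
    have hne0 : 1 - (((k : ℝ) / δ) ^ 2 + (ℓ : ℝ) ^ 2)⁻¹ ≠ 0 := by
      intro h; apply hinv; linarith
    exact abs_pos.mpr hne0
  refine ⟨min (1/2) (F.inf' hFne g), ?_, ?_⟩
  · exact lt_min (by norm_num) ((Finset.lt_inf'_iff _).mpr hgpos)
  · intro k ℓ hk
    have hs0 : 0 < ((k : ℝ) / δ) ^ 2 + (ℓ : ℝ) ^ 2 := hspos k ℓ hk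
    rcases le_or_gt 2 (((k : ℝ) / δ) ^ 2 + (ℓ : ℝ) ^ 2) with h2 | h2
    · have hinv : (((k : ℝ) / δ) ^ 2 + (ℓ : ℝ) ^ 2)⁻¹ ≤ 2⁻¹ := by
        apply inv_anti₀ (by norm_num) h2
      have hip : 0 < (((k : ℝ) / δ) ^ 2 + (ℓ : ℝ) ^ 2)⁻¹ := inv_pos.mpr hs0
      have : (1:ℝ)/2 ≤ |1 - (((k : ℝ) / δ) ^ 2 + (ℓ : ℝ) ^ 2)⁻¹| := by
        rw [abs_of_nonneg (by linarith)]; linarith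
      exact le_trans (min_le_left _ _) this
    · have hkp := hkpos k hk
      have hl2 : (ℓ : ℝ) ^ 2 < 2 := by nlinarith
      have hl : -1 ≤ ℓ ∧ ℓ ≤ 1 := by
        constructor <;> by_contra h <;> push_neg at h
        · have h' : (ℓ : ℝ) ≤ -2 := by exact_mod_cast (by omega : ℓ ≤ -2)
          nlinarith
        · have h' : (2:ℝ) ≤ (ℓ : ℝ) := by exact_mod_cast (by omega : (2:ℤ) ≤ ℓ)
          nlinarith
      have hkb : -K ≤ k ∧ k ≤ K := by
        have hk2 : ((k:ℝ)/δ)^2 < 2 := by nlinarith [sq_nonneg ((ℓ:ℝ))]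
        have hkr : (k:ℝ)^2 < 2 * δ^2 := by
          have hd2 : (0:ℝ) < δ^2 := by positivity
          rw [div_pow] at hk2
          calc (k:ℝ)^2 = ((k:ℝ)^2/δ^2) * δ^2 := by field_simp
          _ < 2 * δ^2 := mul_lt_mul_of_pos_right hk2 hd2
        have habs : |(k:ℝ)| < 2 * δ := by
          nlinarith [abs_nonneg (k:ℝ), sq_abs (k:ℝ)]
        have hKr : (2:ℝ) * δ ≤ (K:ℝ) := Int.le_ceil _
        have hlt : ((|k| : ℤ) : ℝ) < (K:ℝ) := by
          push_cast
          exact lt_of_lt_of_le habs hKr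
        have h1 : |k| ≤ K := by exact_mod_cast hlt.le
        exact ⟨by linarith [neg_abs_le k], by linarith [le_abs_self k]⟩
      have hmem : (k, ℓ) ∈ F := by
        simp only [hF, Finset.mem_product, Finset.mem_erase, Finset.mem_Icc]
        exact ⟨⟨hk, hkb.1, hkb.2⟩, hl.1, hl.2⟩
      exact le_trans (min_le_right _ _) (Finset.inf'_le g hmem)

theorem spectral_gap_rectangular_torus (δ : ℝ) (hδ : 0 < δ) (hδn : ∀ n : ℕ, δ ≠ n) :
    ∃ c : ℝ, 0 < c ∧
      ∀ a : ℤ × ℤ → ℂ, a (0, 0) = 0 →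
        Summable (fun p : ℤ × ℤ => (((p.1 : ℝ) / δ) ^ 2) * ‖a p‖ ^ 2) →
        ∑' p : ℤ × ℤ,
            ((1 - (((p.1 : ℝ) / δ) ^ 2 + (p.2 : ℝ) ^ 2)⁻¹) * ((p.1 : ℝ) / δ)) ^ 2 * ‖a p‖ ^ 2
          ≥ c ^ 2 * ∑' p : ℤ × ℤ, (((p.1 : ℝ) / δ) ^ 2) * ‖a p‖ ^ 2 := by
  obtain ⟨c, hc, hsym⟩ := symbol_lower_bound δ hδ hδn
  refine ⟨c, hc, ?_⟩
  intro a _ hA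
  have key : ∀ p : ℤ × ℤ,
      c ^ 2 * ((((p.1 : ℝ) / δ) ^ 2) * ‖a p‖ ^ 2) ≤
      ((1 - (((p.1 : ℝ) / δ) ^ 2 + (p.2 : ℝ) ^ 2)⁻¹) * ((p.1 : ℝ) / δ)) ^ 2 * ‖a p‖ ^ 2 := by
    rintro ⟨k, ℓ⟩
    by_cases hk : k = 0
    · subst hk; simp
    · have h := hsym k ℓ hk
      have hsq : c ^ 2 ≤ (1 - (((k : ℝ) / δ) ^ 2 + (ℓ : ℝ) ^ 2)⁻¹) ^ 2 := by
        calc c ^ 2 ≤ |1 - (((k : ℝ) / δ) ^ 2 + (ℓ : ℝ) ^ 2)⁻¹| ^ 2 :=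
              pow_le_pow_left₀ hc.le h 2
          _ = _ := sq_abs _
      have hnn : (0:ℝ) ≤ (((k:ℝ)/δ)^2) * ‖a (k,ℓ)‖^2 := by positivity
      calc c^2 * ((((k:ℝ)/δ)^2) * ‖a (k,ℓ)‖^2)
          ≤ (1 - (((k : ℝ) / δ) ^ 2 + (ℓ : ℝ) ^ 2)⁻¹)^2 * ((((k:ℝ)/δ)^2) * ‖a (k,ℓ)‖^2) :=
            mul_le_mul_of_nonneg_right hsq hnn
        _ = _ := by ring
  have hub : ∀ p : ℤ × ℤ,
      ((1 - (((p.1 : ℝ) / δ) ^ 2 + (p.2 : ℝ) ^ 2)⁻¹) * ((p.1 : ℝ) / δ)) ^ 2 * ‖a p‖ ^ 2 ≤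
      (1 + δ^2)^2 * ((((p.1 : ℝ) / δ) ^ 2) * ‖a p‖ ^ 2) := by
    rintro ⟨k, ℓ⟩
    by_cases hk : k = 0
    · subst hk; simp
    · have hk1 : (1:ℝ) ≤ (k:ℝ)^2 := by
        have h1 : (1:ℤ) ≤ k^2 := by
          rcases lt_or_gt_of_ne hk with h | h <;> nlinarith
        exact_mod_cast h1
      have hs1 : 1/δ^2 ≤ ((k:ℝ)/δ)^2 + (ℓ:ℝ)^2 := by
        have : 1/δ^2 ≤ ((k:ℝ)/δ)^2 := by
          rw [div_pow, div_le_div_iff₀ (by positivity) (by positivity)]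
          nlinarith
        nlinarith [sq_nonneg ((ℓ:ℝ))]
      have hspos : 0 < ((k:ℝ)/δ)^2 + (ℓ:ℝ)^2 := lt_of_lt_of_le (by positivity) hs1
      have hinv : (((k:ℝ)/δ)^2 + (ℓ:ℝ)^2)⁻¹ ≤ δ^2 := by
        rw [inv_le_comm₀ hspos (by positivity)]
        rw [inv_eq_one_div]
        linarith
      have hip : 0 < (((k:ℝ)/δ)^2 + (ℓ:ℝ)^2)⁻¹ := inv_pos.mpr hspos
      have hbd : (1 - (((k:ℝ)/δ)^2 + (ℓ:ℝ)^2)⁻¹)^2 ≤ (1 + δ^2)^2 := by nlinarith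
      have hnn : (0:ℝ) ≤ (((k:ℝ)/δ)^2) * ‖a (k,ℓ)‖^2 := by positivity
      calc ((1 - (((k:ℝ)/δ)^2 + (ℓ:ℝ)^2)⁻¹) * ((k:ℝ)/δ))^2 * ‖a (k,ℓ)‖^2
          = (1 - (((k:ℝ)/δ)^2 + (ℓ:ℝ)^2)⁻¹)^2 * ((((k:ℝ)/δ)^2) * ‖a (k,ℓ)‖^2) := by ring
        _ ≤ (1 + δ^2)^2 * ((((k:ℝ)/δ)^2) * ‖a (k,ℓ)‖^2) := mul_le_mul_of_nonneg_right hbd hnn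
  have hfsum : Summable (fun p : ℤ × ℤ =>
      ((1 - (((p.1 : ℝ) / δ) ^ 2 + (p.2 : ℝ) ^ 2)⁻¹) * ((p.1 : ℝ) / δ)) ^ 2 * ‖a p‖ ^ 2) :=
    Summable.of_nonneg_of_le (fun p => by positivity) hub (hA.mul_left _)
  rw [ge_iff_le, ← tsum_mul_left]
  exact Summable.tsum_le_tsum key (hA.mul_left _) hfsum
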